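/- Let δ be a real number. Define the 3×3 complex matrices ρ̃ = [[1/4, δ, 0],[δ, 1/2, δ],[0, δ, 1/4]] and τ = [[1/10 + 152δ²/225, 38δ/45, 152δ²/225],[38δ/45, 4/5 − 304δ²/225, 38δ/45],[152δ²/225, 38δ/45, 1/10 + 152δ²/225]]. On ℂ³⊗ℂ³ (basis |ab⟩, a,b ∈ {1,2,3}, first factor S, second factor C), let K₀ = Σ_{i=1}^{3} |ii⟩⟨ii| + Σ_{(i,j)∈{(1,2),(2,3),(1,3)}} |e⁺_{ij}⟩⟨e⁺_{ij}| and, for each (i,j) ∈ {(1,2),(2,3),(1,3)}, K_{(i,j)} = |22⟩⟨e⁻_{ij}|, where |e^{±}_{ij}⟩ = (|ij⟩ ± |ji⟩)/√2. Define the channel E(M) = K₀MK₀ᴴ + Σ_{(i,j)} K_{(i,j)} M K_{(i,j)}ᴴ. Then: (i) K₀ᴴK₀ + Σ_{(i,j)} K_{(i,j)}ᴴK_{(i,j)} = I₉; (ii) the partial trace of E(ρ̃⊗τ) over the first factor equals τ (the catalyst is exactly restored); (iii) the (1,3) entry of the partial trace of E(ρ̃⊗τ) over the second factor equals 152δ²/225,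 which is strictly positive whenever δ ≠ 0. -/
import Mathlib


open Matrix Kronecker

/-- The basis state `|ab⟩` of `ℂ³ ⊗ ℂ³`. -/
def ket (a b : Fin 3) : Fin 3 × Fin 3 → ℂ := fun p => if p = (a, b) then 1 else 0

/-- `|e⁺_{ij}⟩ = (|ij⟩ + |ji⟩)/√2`. -/
noncomputable def eplus (i j : Fin 3) : Fin 3 × Fin 3 → ℂ :=
  fun p => (ket i j p + ket j i p) / Real.sqrt 2

/-- `|e⁻_{ij}⟩ = (|ij⟩ - |ji⟩)/√2`. -/
noncomputable def eminus (i j : Fin 3) : Fin 3 × Fin 3 → ℂ :=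
  fun p => (ket i j p - ket j i p) / Real.sqrt 2

/-- The projection `K₀` onto the span of `|ii⟩` and `|e⁺_{ij}⟩`. -/
noncomputable def Kproj : Matrix (Fin 3 × Fin 3) (Fin 3 × Fin 3) ℂ :=
  (∑ i : Fin 3, Matrix.vecMulVec (ket i i) (star (ket i i)))
    + Matrix.vecMulVec (eplus 0 1) (star (eplus 0 1))
    + Matrix.vecMulVec (eplus 1 2) (star (eplus 1 2))
    + Matrix.vecMulVec (eplus 0 2) (star (eplus 0 2))

/-- The Kraus operator `K_{(i,j)} = |22⟩⟨e⁻_{ij}|`. -/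
noncomputable def Kminus (i j : Fin 3) : Matrix (Fin 3 × Fin 3) (Fin 3 × Fin 3) ℂ :=
  Matrix.vecMulVec (ket 1 1) (star (eminus i j))

noncomputable def rhoTilde (δ : ℝ) : Matrix (Fin 3) (Fin 3) ℂ :=
  !![1 / 4, δ, 0; δ, 1 / 2, δ; 0, δ, 1 / 4]

noncomputable def tauCat (δ : ℝ) : Matrix (Fin 3) (Fin 3) ℂ :=
  !![1 / 10 + 152 * δ ^ 2 / 225, 38 * δ / 45, 152 * δ ^ 2 / 225;
     38 * δ / 45, 4 / 5 - 304 * δ ^ 2 / 225, 38 * δ / 45;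
     152 * δ ^ 2 / 225, 38 * δ / 45, 1 / 10 + 152 * δ ^ 2 / 225]

/-- The covariant channel `E(M) = K₀MK₀ᴴ + Σ_{(i,j)} K_{(i,j)} M K_{(i,j)}ᴴ`. -/
noncomputable def chan (M : Matrix (Fin 3 × Fin 3) (Fin 3 × Fin 3) ℂ) :
    Matrix (Fin 3 × Fin 3) (Fin 3 × Fin 3) ℂ :=
  Kproj * M * Kprojᴴ + Kminus 0 1 * M * (Kminus 0 1)ᴴ
    + Kminus 1 2 * M * (Kminus 1 2)ᴴ + Kminus 0 2 * M * (Kminus 0 2)ᴴ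

/-- Partial trace over the first tensor factor (system `S`). -/
noncomputable def ptrFirst (M : Matrix (Fin 3 × Fin 3) (Fin 3 × Fin 3) ℂ) :
    Matrix (Fin 3) (Fin 3) ℂ :=
  Matrix.of fun a b => ∑ c : Fin 3, M (c, a) (c, b)

/-- Partial trace over the second tensor factor (system `C`). -/
noncomputable def ptrSecond (M : Matrix (Fin 3 × Fin 3) (Fin 3 × Fin 3) ℂ) :
    Matrix (Fin 3) (Fin 3) ℂ :=
  Matrix.of fun a b => ∑ c : Fin 3, M (a, c) (b, c)


lemma star_ket (a b : Fin 3) (p : Fin 3 × Fin 3) : star (ket a b p) = ket a b p := by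
  unfold ket; split <;> simp
lemma sqrt2_mul : ((Real.sqrt 2 : ℝ) : ℂ) * ((Real.sqrt 2 : ℝ) : ℂ) = 2 := by
  norm_cast; exact Real.mul_self_sqrt (by norm_num)
lemma sqrt2_ne : ((Real.sqrt 2 : ℝ) : ℂ) ≠ 0 := by
  intro h
  have := sqrt2_mul
  rw [h] at this; simp at this
lemma star_sqrt2 : star ((Real.sqrt 2 : ℝ) : ℂ) = ((Real.sqrt 2 : ℝ) : ℂ) :=
  Complex.conj_ofReal _
lemma ep_mul (i j : Fin 3) (p q : Fin 3 × Fin 3) :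
    eplus i j p * (starRingEnd ℂ) (eplus i j q)
      = (ket i j p + ket j i p) * (ket i j q + ket j i q) / 2 := by
  unfold eplus
  rw [map_div₀, map_add]
  rw [show ∀ z, (starRingEnd ℂ) z = star z from fun _ => rfl,
    show ∀ z, (starRingEnd ℂ) z = star z from fun _ => rfl,
    show ∀ z, (starRingEnd ℂ) z = star z from fun _ => rfl]
  rw [star_ket, star_ket, star_sqrt2, div_mul_div_comm, sqrt2_mul]
lemma star_eminus (i j : Fin 3) (p : Fin 3 × Fin 3) :
    star (eminus i j p) = eminus i j p := by
  unfold eminus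
  rw [star_div₀, star_sub, star_ket, star_ket, star_sqrt2]

noncomputable def Kf (p q : Fin 3 × Fin 3) : ℂ :=
  ket 0 0 p * ket 0 0 q + ket 1 1 p * ket 1 1 q + ket 2 2 p * ket 2 2 q
    + (ket 0 1 p + ket 1 0 p) * (ket 0 1 q + ket 1 0 q) / 2
    + (ket 1 2 p + ket 2 1 p) * (ket 1 2 q + ket 2 1 q) / 2
    + (ket 0 2 p + ket 2 0 p) * (ket 0 2 q + ket 2 0 q) / 2

lemma Kproj_eq : Kproj = Matrix.of Kf := by
  ext p q
  simp [Kproj, Kf, Matrix.sum_apply, Matrix.vecMulVec_apply, star_ket, ep_mul,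
    Fin.sum_univ_three]

lemma sum_ket_mul (a b : Fin 3) (f : Fin 3 × Fin 3 → ℂ) :
    ∑ s : Fin 3 × Fin 3, ket a b s * f s = f (a, b) := by
  simp [ket, ite_mul]

lemma sum_eminus_mul (i j : Fin 3) (f : Fin 3 × Fin 3 → ℂ) :
    ∑ s : Fin 3 × Fin 3, eminus i j s * f s = (f (i, j) - f (j, i)) / Real.sqrt 2 := by
  simp only [eminus, div_mul_eq_mul_div, sub_mul, ← Finset.sum_div,
    Finset.sum_sub_distrib, sum_ket_mul]

lemma Km_conj (i j : Fin 3) (M : Matrix (Fin 3 × Fin 3) (Fin 3 × Fin 3) ℂ) :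
    Kminus i j * M * (Kminus i j)ᴴ = Matrix.of fun p q =>
      ket 1 1 p * ket 1 1 q *
        ((M (i,j) (i,j) - M (i,j) (j,i) - M (j,i) (i,j) + M (j,i) (j,i)) / 2) := by
  ext p q
  simp only [Matrix.mul_apply, Matrix.conjTranspose_apply, Kminus,
    Matrix.vecMulVec_apply, Pi.star_apply, star_mul', star_star, star_ket, star_eminus,
    Matrix.of_apply]
  have h1 : ∀ x, (∑ y, ket 1 1 p * eminus i j y * M y x)
      = ket 1 1 p * ((M (i,j) x - M (j,i) x) / Real.sqrt 2) := by
    intro x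
    rw [← sum_eminus_mul i j (fun y => M y x), Finset.mul_sum]
    exact Finset.sum_congr rfl fun y _ => by ring
  simp only [h1]
  have h2 : (∑ x, ket 1 1 p * ((M (i,j) x - M (j,i) x) / (Real.sqrt 2 : ℝ))
        * (ket 1 1 q * eminus i j x))
      = ket 1 1 p * ket 1 1 q * (((Real.sqrt 2 : ℝ) : ℂ))⁻¹
        * ∑ x, eminus i j x * (M (i,j) x - M (j,i) x) := by
    rw [Finset.mul_sum]
    exact Finset.sum_congr rfl fun x _ => by ring
  rw [h2, sum_eminus_mul, mul_assoc]
  rw [show ((((Real.sqrt 2 : ℝ) : ℂ))⁻¹ *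
      ((M (i,j) (i,j) - M (j,i) (i,j) - (M (i,j) (j,i) - M (j,i) (j,i))) / ((Real.sqrt 2 : ℝ) : ℂ)))
    = (M (i,j) (i,j) - M (j,i) (i,j) - (M (i,j) (j,i) - M (j,i) (j,i))) / 2 from by
      rw [div_eq_mul_inv, mul_left_comm, ← mul_inv, sqrt2_mul, ← div_eq_mul_inv]]
  ring

lemma em_mul' (i j : Fin 3) (p q : Fin 3 × Fin 3) :
    eminus i j p * eminus i j q
      = (ket i j p - ket j i p) * (ket i j q - ket j i q) / 2 := by
  unfold eminus
  rw [div_mul_div_comm, sqrt2_mul]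

lemma star_Kf (p q : Fin 3 × Fin 3) : star (Kf q p) = Kf p q := by
  simp only [Kf, star_add, star_div₀, star_mul', star_ket]
  have : star (2 : ℂ) = 2 := by norm_num
  rw [this]
  ring

lemma Kproj_herm : Kprojᴴ = Kproj := by
  rw [Kproj_eq]
  ext p q
  simp [Matrix.conjTranspose_apply, star_Kf]

lemma KmKm (i j : Fin 3) : (Kminus i j)ᴴ * Kminus i j = Matrix.of fun p q =>
    (ket i j p - ket j i p) * (ket i j q - ket j i q) / 2 := by
  ext p q
  simp only [Matrix.mul_apply, Matrix.conjTranspose_apply, Kminus,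
    Matrix.vecMulVec_apply, Pi.star_apply, star_mul', star_star, star_ket, star_eminus,
    Matrix.of_apply]
  rw [show (∑ x : Fin 3 × Fin 3, ket 1 1 x * eminus i j p * (ket 1 1 x * eminus i j q))
      = (∑ x : Fin 3 × Fin 3, ket 1 1 x * ket 1 1 x) * (eminus i j p * eminus i j q) from by
    rw [Finset.sum_mul]; exact Finset.sum_congr rfl fun x _ => by ring]
  rw [show (∑ x : Fin 3 × Fin 3, ket 1 1 x * ket 1 1 x) = 1 from by
    simp [ket, Fintype.sum_prod_type, Fin.sum_univ_three]]
  rw [one_mul, em_mul']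

noncomputable def Pm (i j : Fin 3) : Matrix (Fin 3 × Fin 3) (Fin 3 × Fin 3) ℂ :=
  Matrix.of fun p q => (ket i j p - ket j i p) * (ket i j q - ket j i q) / 2

lemma KmKmP (i j : Fin 3) : (Kminus i j)ᴴ * Kminus i j = Pm i j := by
  ext p q
  simp only [Matrix.mul_apply, Matrix.conjTranspose_apply, Kminus,
    Matrix.vecMulVec_apply, Pi.star_apply, star_mul', star_star, star_ket, star_eminus,
    Pm, Matrix.of_apply]
  rw [show (∑ x : Fin 3 × Fin 3, ket 1 1 x * eminus i j p * (ket 1 1 x * eminus i j q))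
      = (∑ x : Fin 3 × Fin 3, ket 1 1 x * ket 1 1 x) * (eminus i j p * eminus i j q) from by
    rw [Finset.sum_mul]; exact Finset.sum_congr rfl fun x _ => by ring]
  rw [show (∑ x : Fin 3 × Fin 3, ket 1 1 x * ket 1 1 x) = 1 from by
    simp [ket, Fintype.sum_prod_type, Fin.sum_univ_three]]
  rw [one_mul, em_mul']

lemma Pm_mul_eq (i j k l : Fin 3) (S : ℂ)
    (hS : ∑ r : Fin 3 × Fin 3, (ket i j r - ket j i r) * (ket k l r - ket l k r) = S) :
    Pm i j * Pm k l = Matrix.of fun p q =>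
      (ket i j p - ket j i p) * (ket k l q - ket l k q) * S / 4 := by
  ext p q
  simp only [Matrix.mul_apply, Pm, Matrix.of_apply]
  calc (∑ x, (ket i j p - ket j i p) * (ket i j x - ket j i x) / 2 *
        ((ket k l x - ket l k x) * (ket k l q - ket l k q) / 2))
      = ∑ x, (ket i j p - ket j i p) * (ket k l q - ket l k q) *
          ((ket i j x - ket j i x) * (ket k l x - ket l k x)) / 4 :=
        Finset.sum_congr rfl fun x _ => by ring
    _ = (ket i j p - ket j i p) * (ket k l q - ket l k q) *
          (∑ x, (ket i j x - ket j i x) * (ket k l x - ket l k x)) / 4 := by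
        rw [← Finset.sum_div, ← Finset.mul_sum]
    _ = _ := by rw [hS]

lemma Pm_idem (i j : Fin 3)
    (hS : ∑ r : Fin 3 × Fin 3, (ket i j r - ket j i r) * (ket i j r - ket j i r) = 2) :
    Pm i j * Pm i j = Pm i j := by
  rw [Pm_mul_eq i j i j 2 hS]
  ext p q
  simp only [Matrix.of_apply, Pm]
  ring

lemma Pm_orth (i j k l : Fin 3)
    (hS : ∑ r : Fin 3 × Fin 3, (ket i j r - ket j i r) * (ket k l r - ket l k r) = 0) :
    Pm i j * Pm k l = 0 := by
  rw [Pm_mul_eq i j k l 0 hS]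
  ext p q
  simp

lemma wsum (i j k l : Fin 3) :
    ∑ r : Fin 3 × Fin 3, (ket i j r - ket j i r) * (ket k l r - ket l k r)
      = (ket k l (i, j) - ket l k (i, j)) - (ket k l (j, i) - ket l k (j, i)) := by
  simp only [sub_mul, Finset.sum_sub_distrib, sum_ket_mul]

lemma P1_idem : Pm 0 1 * Pm 0 1 = Pm 0 1 :=
  Pm_idem 0 1 (by rw [wsum]; norm_num [ket, Prod.ext_iff, Fin.ext_iff])
lemma P2_idem : Pm 1 2 * Pm 1 2 = Pm 1 2 :=
  Pm_idem 1 2 (by rw [wsum]; norm_num [ket, Prod.ext_iff, Fin.ext_iff])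
lemma P3_idem : Pm 0 2 * Pm 0 2 = Pm 0 2 :=
  Pm_idem 0 2 (by rw [wsum]; norm_num [ket, Prod.ext_iff, Fin.ext_iff])
lemma P12 : Pm 0 1 * Pm 1 2 = 0 :=
  Pm_orth 0 1 1 2 (by rw [wsum]; norm_num [ket, Prod.ext_iff, Fin.ext_iff])
lemma P13 : Pm 0 1 * Pm 0 2 = 0 :=
  Pm_orth 0 1 0 2 (by rw [wsum]; norm_num [ket, Prod.ext_iff, Fin.ext_iff])
lemma P21 : Pm 1 2 * Pm 0 1 = 0 :=
  Pm_orth 1 2 0 1 (by rw [wsum]; norm_num [ket, Prod.ext_iff, Fin.ext_iff])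
lemma P23 : Pm 1 2 * Pm 0 2 = 0 :=
  Pm_orth 1 2 0 2 (by rw [wsum]; norm_num [ket, Prod.ext_iff, Fin.ext_iff])
lemma P31 : Pm 0 2 * Pm 0 1 = 0 :=
  Pm_orth 0 2 0 1 (by rw [wsum]; norm_num [ket, Prod.ext_iff, Fin.ext_iff])
lemma P32 : Pm 0 2 * Pm 1 2 = 0 :=
  Pm_orth 0 2 1 2 (by rw [wsum]; norm_num [ket, Prod.ext_iff, Fin.ext_iff])

lemma one_entry (p q : Fin 3 × Fin 3) :
    (1 : Matrix (Fin 3 × Fin 3) (Fin 3 × Fin 3) ℂ) p q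
      = ∑ s : Fin 3 × Fin 3, ket s.1 s.2 p * ket s.1 s.2 q := by
  simp only [Matrix.one_apply, ket, Prod.mk.eta, ite_mul, one_mul, zero_mul]
  rw [Finset.sum_ite_eq (Finset.univ) p (fun s => if q = s then (1:ℂ) else 0)]
  simp [eq_comm]

lemma Kf_one : Matrix.of Kf = 1 - Pm 0 1 - Pm 1 2 - Pm 0 2 := by
  ext p q
  simp only [Matrix.of_apply, Matrix.sub_apply, Pm, one_entry, Fintype.sum_prod_type,
    Fin.sum_univ_three, Kf]
  ring

lemma Kf_00_00 : Kf (0, 0) (0, 0) = 1 := by simp [Kf, ket, Prod.ext_iff]; try norm_num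
lemma Kf_00_01 : Kf (0, 0) (0, 1) = 0 := by simp [Kf, ket, Prod.ext_iff]; try norm_num
lemma Kf_00_02 : Kf (0, 0) (0, 2) = 0 := by simp [Kf, ket, Prod.ext_iff]; try norm_num
lemma Kf_00_10 : Kf (0, 0) (1, 0) = 0 := by simp [Kf, ket, Prod.ext_iff]; try norm_num
lemma Kf_00_11 : Kf (0, 0) (1, 1) = 0 := by simp [Kf, ket, Prod.ext_iff]; try norm_num
lemma Kf_00_12 : Kf (0, 0) (1, 2) = 0 := by simp [Kf, ket, Prod.ext_iff]; try norm_num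
lemma Kf_00_20 : Kf (0, 0) (2, 0) = 0 := by simp [Kf, ket, Prod.ext_iff]; try norm_num
lemma Kf_00_21 : Kf (0, 0) (2, 1) = 0 := by simp [Kf, ket, Prod.ext_iff]; try norm_num
lemma Kf_00_22 : Kf (0, 0) (2, 2) = 0 := by simp [Kf, ket, Prod.ext_iff]; try norm_num
lemma Kf_01_00 : Kf (0, 1) (0, 0) = 0 := by simp [Kf, ket, Prod.ext_iff]; try norm_num
lemma Kf_01_01 : Kf (0, 1) (0, 1) = 1 / 2 := by simp [Kf, ket, Prod.ext_iff]; try norm_num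
lemma Kf_01_02 : Kf (0, 1) (0, 2) = 0 := by simp [Kf, ket, Prod.ext_iff]; try norm_num
lemma Kf_01_10 : Kf (0, 1) (1, 0) = 1 / 2 := by simp [Kf, ket, Prod.ext_iff]; try norm_num
lemma Kf_01_11 : Kf (0, 1) (1, 1) = 0 := by simp [Kf, ket, Prod.ext_iff]; try norm_num
lemma Kf_01_12 : Kf (0, 1) (1, 2) = 0 := by simp [Kf, ket, Prod.ext_iff]; try norm_num
lemma Kf_01_20 : Kf (0, 1) (2, 0) = 0 := by simp [Kf, ket, Prod.ext_iff]; try norm_num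
lemma Kf_01_21 : Kf (0, 1) (2, 1) = 0 := by simp [Kf, ket, Prod.ext_iff]; try norm_num
lemma Kf_01_22 : Kf (0, 1) (2, 2) = 0 := by simp [Kf, ket, Prod.ext_iff]; try norm_num
lemma Kf_02_00 : Kf (0, 2) (0, 0) = 0 := by simp [Kf, ket, Prod.ext_iff]; try norm_num
lemma Kf_02_01 : Kf (0, 2) (0, 1) = 0 := by simp [Kf, ket, Prod.ext_iff]; try norm_num
lemma Kf_02_02 : Kf (0, 2) (0, 2) = 1 / 2 := by simp [Kf, ket, Prod.ext_iff]; try norm_num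
lemma Kf_02_10 : Kf (0, 2) (1, 0) = 0 := by simp [Kf, ket, Prod.ext_iff]; try norm_num
lemma Kf_02_11 : Kf (0, 2) (1, 1) = 0 := by simp [Kf, ket, Prod.ext_iff]; try norm_num
lemma Kf_02_12 : Kf (0, 2) (1, 2) = 0 := by simp [Kf, ket, Prod.ext_iff]; try norm_num
lemma Kf_02_20 : Kf (0, 2) (2, 0) = 1 / 2 := by simp [Kf, ket, Prod.ext_iff]; try norm_num
lemma Kf_02_21 : Kf (0, 2) (2, 1) = 0 := by simp [Kf, ket, Prod.ext_iff]; try norm_num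
lemma Kf_02_22 : Kf (0, 2) (2, 2) = 0 := by simp [Kf, ket, Prod.ext_iff]; try norm_num
lemma Kf_10_00 : Kf (1, 0) (0, 0) = 0 := by simp [Kf, ket, Prod.ext_iff]; try norm_num
lemma Kf_10_01 : Kf (1, 0) (0, 1) = 1 / 2 := by simp [Kf, ket, Prod.ext_iff]; try norm_num
lemma Kf_10_02 : Kf (1, 0) (0, 2) = 0 := by simp [Kf, ket, Prod.ext_iff]; try norm_num
lemma Kf_10_10 : Kf (1, 0) (1, 0) = 1 / 2 := by simp [Kf, ket, Prod.ext_iff]; try norm_num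
lemma Kf_10_11 : Kf (1, 0) (1, 1) = 0 := by simp [Kf, ket, Prod.ext_iff]; try norm_num
lemma Kf_10_12 : Kf (1, 0) (1, 2) = 0 := by simp [Kf, ket, Prod.ext_iff]; try norm_num
lemma Kf_10_20 : Kf (1, 0) (2, 0) = 0 := by simp [Kf, ket, Prod.ext_iff]; try norm_num
lemma Kf_10_21 : Kf (1, 0) (2, 1) = 0 := by simp [Kf, ket, Prod.ext_iff]; try norm_num
lemma Kf_10_22 : Kf (1, 0) (2, 2) = 0 := by simp [Kf, ket, Prod.ext_iff]; try norm_num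
lemma Kf_11_00 : Kf (1, 1) (0, 0) = 0 := by simp [Kf, ket, Prod.ext_iff]; try norm_num
lemma Kf_11_01 : Kf (1, 1) (0, 1) = 0 := by simp [Kf, ket, Prod.ext_iff]; try norm_num
lemma Kf_11_02 : Kf (1, 1) (0, 2) = 0 := by simp [Kf, ket, Prod.ext_iff]; try norm_num
lemma Kf_11_10 : Kf (1, 1) (1, 0) = 0 := by simp [Kf, ket, Prod.ext_iff]; try norm_num
lemma Kf_11_11 : Kf (1, 1) (1, 1) = 1 := by simp [Kf, ket, Prod.ext_iff]; try norm_num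
lemma Kf_11_12 : Kf (1, 1) (1, 2) = 0 := by simp [Kf, ket, Prod.ext_iff]; try norm_num
lemma Kf_11_20 : Kf (1, 1) (2, 0) = 0 := by simp [Kf, ket, Prod.ext_iff]; try norm_num
lemma Kf_11_21 : Kf (1, 1) (2, 1) = 0 := by simp [Kf, ket, Prod.ext_iff]; try norm_num
lemma Kf_11_22 : Kf (1, 1) (2, 2) = 0 := by simp [Kf, ket, Prod.ext_iff]; try norm_num
lemma Kf_12_00 : Kf (1, 2) (0, 0) = 0 := by simp [Kf, ket, Prod.ext_iff]; try norm_num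
lemma Kf_12_01 : Kf (1, 2) (0, 1) = 0 := by simp [Kf, ket, Prod.ext_iff]; try norm_num
lemma Kf_12_02 : Kf (1, 2) (0, 2) = 0 := by simp [Kf, ket, Prod.ext_iff]; try norm_num
lemma Kf_12_10 : Kf (1, 2) (1, 0) = 0 := by simp [Kf, ket, Prod.ext_iff]; try norm_num
lemma Kf_12_11 : Kf (1, 2) (1, 1) = 0 := by simp [Kf, ket, Prod.ext_iff]; try norm_num
lemma Kf_12_12 : Kf (1, 2) (1, 2) = 1 / 2 := by simp [Kf, ket, Prod.ext_iff]; try norm_num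
lemma Kf_12_20 : Kf (1, 2) (2, 0) = 0 := by simp [Kf, ket, Prod.ext_iff]; try norm_num
lemma Kf_12_21 : Kf (1, 2) (2, 1) = 1 / 2 := by simp [Kf, ket, Prod.ext_iff]; try norm_num
lemma Kf_12_22 : Kf (1, 2) (2, 2) = 0 := by simp [Kf, ket, Prod.ext_iff]; try norm_num
lemma Kf_20_00 : Kf (2, 0) (0, 0) = 0 := by simp [Kf, ket, Prod.ext_iff]; try norm_num
lemma Kf_20_01 : Kf (2, 0) (0, 1) = 0 := by simp [Kf, ket, Prod.ext_iff]; try norm_num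
lemma Kf_20_02 : Kf (2, 0) (0, 2) = 1 / 2 := by simp [Kf, ket, Prod.ext_iff]; try norm_num
lemma Kf_20_10 : Kf (2, 0) (1, 0) = 0 := by simp [Kf, ket, Prod.ext_iff]; try norm_num
lemma Kf_20_11 : Kf (2, 0) (1, 1) = 0 := by simp [Kf, ket, Prod.ext_iff]; try norm_num
lemma Kf_20_12 : Kf (2, 0) (1, 2) = 0 := by simp [Kf, ket, Prod.ext_iff]; try norm_num
lemma Kf_20_20 : Kf (2, 0) (2, 0) = 1 / 2 := by simp [Kf, ket, Prod.ext_iff]; try norm_num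
lemma Kf_20_21 : Kf (2, 0) (2, 1) = 0 := by simp [Kf, ket, Prod.ext_iff]; try norm_num
lemma Kf_20_22 : Kf (2, 0) (2, 2) = 0 := by simp [Kf, ket, Prod.ext_iff]; try norm_num
lemma Kf_21_00 : Kf (2, 1) (0, 0) = 0 := by simp [Kf, ket, Prod.ext_iff]; try norm_num
lemma Kf_21_01 : Kf (2, 1) (0, 1) = 0 := by simp [Kf, ket, Prod.ext_iff]; try norm_num
lemma Kf_21_02 : Kf (2, 1) (0, 2) = 0 := by simp [Kf, ket, Prod.ext_iff]; try norm_num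
lemma Kf_21_10 : Kf (2, 1) (1, 0) = 0 := by simp [Kf, ket, Prod.ext_iff]; try norm_num
lemma Kf_21_11 : Kf (2, 1) (1, 1) = 0 := by simp [Kf, ket, Prod.ext_iff]; try norm_num
lemma Kf_21_12 : Kf (2, 1) (1, 2) = 1 / 2 := by simp [Kf, ket, Prod.ext_iff]; try norm_num
lemma Kf_21_20 : Kf (2, 1) (2, 0) = 0 := by simp [Kf, ket, Prod.ext_iff]; try norm_num
lemma Kf_21_21 : Kf (2, 1) (2, 1) = 1 / 2 := by simp [Kf, ket, Prod.ext_iff]; try norm_num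
lemma Kf_21_22 : Kf (2, 1) (2, 2) = 0 := by simp [Kf, ket, Prod.ext_iff]; try norm_num
lemma Kf_22_00 : Kf (2, 2) (0, 0) = 0 := by simp [Kf, ket, Prod.ext_iff]; try norm_num
lemma Kf_22_01 : Kf (2, 2) (0, 1) = 0 := by simp [Kf, ket, Prod.ext_iff]; try norm_num
lemma Kf_22_02 : Kf (2, 2) (0, 2) = 0 := by simp [Kf, ket, Prod.ext_iff]; try norm_num
lemma Kf_22_10 : Kf (2, 2) (1, 0) = 0 := by simp [Kf, ket, Prod.ext_iff]; try norm_num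
lemma Kf_22_11 : Kf (2, 2) (1, 1) = 0 := by simp [Kf, ket, Prod.ext_iff]; try norm_num
lemma Kf_22_12 : Kf (2, 2) (1, 2) = 0 := by simp [Kf, ket, Prod.ext_iff]; try norm_num
lemma Kf_22_20 : Kf (2, 2) (2, 0) = 0 := by simp [Kf, ket, Prod.ext_iff]; try norm_num
lemma Kf_22_21 : Kf (2, 2) (2, 1) = 0 := by simp [Kf, ket, Prod.ext_iff]; try norm_num
lemma Kf_22_22 : Kf (2, 2) (2, 2) = 1 := by simp [Kf, ket, Prod.ext_iff]; try norm_num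

noncomputable def chanE (M : Matrix (Fin 3 × Fin 3) (Fin 3 × Fin 3) ℂ) :
    Matrix (Fin 3 × Fin 3) (Fin 3 × Fin 3) ℂ :=
  Matrix.of Kf * M * Matrix.of Kf
    + (Matrix.of fun p q => ket 1 1 p * ket 1 1 q *
        ((M (0,1) (0,1) - M (0,1) (1,0) - M (1,0) (0,1) + M (1,0) (1,0)) / 2))
    + (Matrix.of fun p q => ket 1 1 p * ket 1 1 q *
        ((M (1,2) (1,2) - M (1,2) (2,1) - M (2,1) (1,2) + M (2,1) (2,1)) / 2))
    + (Matrix.of fun p q => ket 1 1 p * ket 1 1 q *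
        ((M (0,2) (0,2) - M (0,2) (2,0) - M (2,0) (0,2) + M (2,0) (2,0)) / 2))

set_option maxHeartbeats 4000000 in
theorem three_level_coherence_broadcasting (δ : ℝ) :
    Kprojᴴ * Kproj + (Kminus 0 1)ᴴ * Kminus 0 1 + (Kminus 1 2)ᴴ * Kminus 1 2
        + (Kminus 0 2)ᴴ * Kminus 0 2 = 1 ∧
    ptrFirst (chan (rhoTilde δ ⊗ₖ tauCat δ)) = tauCat δ ∧
    ptrSecond (chan (rhoTilde δ ⊗ₖ tauCat δ)) 0 2 = (152 * δ ^ 2 / 225 : ℂ) ∧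
    (δ ≠ 0 → (0 : ℝ) < 152 * δ ^ 2 / 225) := by
  have hchan : ∀ M, chan M = chanE M := by
    intro M
    unfold chan chanE
    rw [Kproj_herm, Kproj_eq, Km_conj, Km_conj, Km_conj]
  refine ⟨?_, ?_, ?_, ?_⟩
  · rw [Kproj_herm, Kproj_eq, KmKmP, KmKmP, KmKmP, Kf_one]
    simp only [sub_mul, mul_sub, one_mul, mul_one, P1_idem, P2_idem, P3_idem,
      P12, P13, P21, P23, P31, P32, sub_zero, zero_sub]
    abel
  · rw [hchan]
    have h00 : ptrFirst (chanE (rhoTilde δ ⊗ₖ tauCat δ)) 0 0 = tauCat δ 0 0 := by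
      simp only [ptrFirst, chanE, Matrix.of_apply, Matrix.add_apply, Matrix.mul_apply,
        Fintype.sum_prod_type, Fin.sum_univ_three,
        Kf_00_00, Kf_00_01, Kf_00_02, Kf_00_10, Kf_00_11, Kf_00_12, Kf_00_20, Kf_00_21, Kf_00_22, Kf_01_00, Kf_01_01, Kf_01_02, Kf_01_10, Kf_01_11, Kf_01_12, Kf_01_20, Kf_01_21, Kf_01_22, Kf_02_00, Kf_02_01, Kf_02_02, Kf_02_10, Kf_02_11, Kf_02_12, Kf_02_20, Kf_02_21, Kf_02_22, Kf_10_00, Kf_10_01, Kf_10_02, Kf_10_10, Kf_10_11, Kf_10_12, Kf_10_20, Kf_10_21, Kf_10_22, Kf_11_00, Kf_11_01, Kf_11_02, Kf_11_10, Kf_11_11, Kf_11_12, Kf_11_20, Kf_11_21, Kf_11_22, Kf_12_00, Kf_12_01, Kf_12_02, Kf_12_10, Kf_12_11, Kf_12_12, Kf_12_20, Kf_12_21, Kf_12_22, Kf_20_00, Kf_20_01, Kf_20_02, Kf_20_10, Kf_20_11, Kf_20_12, Kf_20_20, Kf_20_21, Kf_20_22, Kf_21_00, Kf_21_01, Kf_21_02,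 Kf_21_10, Kf_21_11, Kf_21_12, Kf_21_20, Kf_21_21, Kf_21_22, Kf_22_00, Kf_22_01, Kf_22_02, Kf_22_10, Kf_22_11, Kf_22_12, Kf_22_20, Kf_22_21, Kf_22_22,
        Matrix.kroneckerMap_apply, ket, Prod.mk.injEq,
        zero_mul, mul_zero, add_zero, zero_add, one_mul, mul_one]
      norm_num [rhoTilde, tauCat]
      try simp
      try ring
      try norm_num
    have h01 : ptrFirst (chanE (rhoTilde δ ⊗ₖ tauCat δ)) 0 1 = tauCat δ 0 1 := by
      simp only [ptrFirst, chanE, Matrix.of_apply, Matrix.add_apply, Matrix.mul_apply,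
        Fintype.sum_prod_type, Fin.sum_univ_three,
        Kf_00_00, Kf_00_01, Kf_00_02, Kf_00_10, Kf_00_11, Kf_00_12, Kf_00_20, Kf_00_21, Kf_00_22, Kf_01_00, Kf_01_01, Kf_01_02, Kf_01_10, Kf_01_11, Kf_01_12, Kf_01_20, Kf_01_21, Kf_01_22, Kf_02_00, Kf_02_01, Kf_02_02, Kf_02_10, Kf_02_11, Kf_02_12, Kf_02_20, Kf_02_21, Kf_02_22, Kf_10_00, Kf_10_01, Kf_10_02, Kf_10_10, Kf_10_11, Kf_10_12, Kf_10_20, Kf_10_21, Kf_10_22, Kf_11_00, Kf_11_01, Kf_11_02, Kf_11_10, Kf_11_11, Kf_11_12, Kf_11_20, Kf_11_21, Kf_11_22, Kf_12_00, Kf_12_01, Kf_12_02, Kf_12_10, Kf_12_11, Kf_12_12, Kf_12_20, Kf_12_21, Kf_12_22, Kf_20_00, Kf_20_01, Kf_20_02, Kf_20_10, Kf_20_11, Kf_20_12, Kf_20_20, Kf_20_21, Kf_20_22, Kf_21_00, Kf_21_01, Kf_21_02, Kf_21_10, Kf_21_11, Kf_21_12, Kf_21_20, Kf_21_21, Kf_21_22,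 Kf_22_00, Kf_22_01, Kf_22_02, Kf_22_10, Kf_22_11, Kf_22_12, Kf_22_20, Kf_22_21, Kf_22_22,
        Matrix.kroneckerMap_apply, ket, Prod.mk.injEq,
        zero_mul, mul_zero, add_zero, zero_add, one_mul, mul_one]
      norm_num [rhoTilde, tauCat]
      try simp
      try ring
      try norm_num
    have h02 : ptrFirst (chanE (rhoTilde δ ⊗ₖ tauCat δ)) 0 2 = tauCat δ 0 2 := by
      simp only [ptrFirst, chanE, Matrix.of_apply, Matrix.add_apply, Matrix.mul_apply,
        Fintype.sum_prod_type, Fin.sum_univ_three,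
        Kf_00_00, Kf_00_01, Kf_00_02, Kf_00_10, Kf_00_11, Kf_00_12, Kf_00_20, Kf_00_21, Kf_00_22, Kf_01_00, Kf_01_01, Kf_01_02, Kf_01_10, Kf_01_11, Kf_01_12, Kf_01_20, Kf_01_21, Kf_01_22, Kf_02_00, Kf_02_01, Kf_02_02, Kf_02_10, Kf_02_11, Kf_02_12, Kf_02_20, Kf_02_21, Kf_02_22, Kf_10_00, Kf_10_01, Kf_10_02, Kf_10_10, Kf_10_11, Kf_10_12, Kf_10_20, Kf_10_21, Kf_10_22, Kf_11_00, Kf_11_01, Kf_11_02, Kf_11_10, Kf_11_11, Kf_11_12, Kf_11_20, Kf_11_21, Kf_11_22, Kf_12_00, Kf_12_01, Kf_12_02, Kf_12_10, Kf_12_11, Kf_12_12, Kf_12_20, Kf_12_21, Kf_12_22, Kf_20_00, Kf_20_01, Kf_20_02, Kf_20_10, Kf_20_11, Kf_20_12, Kf_20_20, Kf_20_21, Kf_20_22, Kf_21_00, Kf_21_01, Kf_21_02, Kf_21_10, Kf_21_11, Kf_21_12, Kf_21_20, Kf_21_21, Kf_21_22, Kf_22_00, Kf_22_01, Kf_22_02,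 Kf_22_10, Kf_22_11, Kf_22_12, Kf_22_20, Kf_22_21, Kf_22_22,
        Matrix.kroneckerMap_apply, ket, Prod.mk.injEq,
        zero_mul, mul_zero, add_zero, zero_add, one_mul, mul_one]
      norm_num [rhoTilde, tauCat]
      try simp
      try ring
      try norm_num
    have h10 : ptrFirst (chanE (rhoTilde δ ⊗ₖ tauCat δ)) 1 0 = tauCat δ 1 0 := by
      simp only [ptrFirst, chanE, Matrix.of_apply, Matrix.add_apply, Matrix.mul_apply,
        Fintype.sum_prod_type, Fin.sum_univ_three,
        Kf_00_00, Kf_00_01, Kf_00_02, Kf_00_10, Kf_00_11, Kf_00_12, Kf_00_20, Kf_00_21, Kf_00_22, Kf_01_00, Kf_01_01, Kf_01_02, Kf_01_10, Kf_01_11, Kf_01_12, Kf_01_20, Kf_01_21, Kf_01_22, Kf_02_00, Kf_02_01, Kf_02_02, Kf_02_10, Kf_02_11, Kf_02_12, Kf_02_20, Kf_02_21, Kf_02_22, Kf_10_00, Kf_10_01, Kf_10_02, Kf_10_10, Kf_10_11, Kf_10_12, Kf_10_20, Kf_10_21, Kf_10_22, Kf_11_00, Kf_11_01, Kf_11_02,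 Kf_11_10, Kf_11_11, Kf_11_12, Kf_11_20, Kf_11_21, Kf_11_22, Kf_12_00, Kf_12_01, Kf_12_02, Kf_12_10, Kf_12_11, Kf_12_12, Kf_12_20, Kf_12_21, Kf_12_22, Kf_20_00, Kf_20_01, Kf_20_02, Kf_20_10, Kf_20_11, Kf_20_12, Kf_20_20, Kf_20_21, Kf_20_22, Kf_21_00, Kf_21_01, Kf_21_02, Kf_21_10, Kf_21_11, Kf_21_12, Kf_21_20, Kf_21_21, Kf_21_22, Kf_22_00, Kf_22_01, Kf_22_02, Kf_22_10, Kf_22_11, Kf_22_12, Kf_22_20, Kf_22_21, Kf_22_22,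
        Matrix.kroneckerMap_apply, ket, Prod.mk.injEq,
        zero_mul, mul_zero, add_zero, zero_add, one_mul, mul_one]
      norm_num [rhoTilde, tauCat]
      try simp
      try ring
      try norm_num
    have h11 : ptrFirst (chanE (rhoTilde δ ⊗ₖ tauCat δ)) 1 1 = tauCat δ 1 1 := by
      simp only [ptrFirst, chanE, Matrix.of_apply, Matrix.add_apply, Matrix.mul_apply,
        Fintype.sum_prod_type, Fin.sum_univ_three,
        Kf_00_00, Kf_00_01, Kf_00_02, Kf_00_10, Kf_00_11, Kf_00_12, Kf_00_20, Kf_00_21, Kf_00_22, Kf_01_00, Kf_01_01, Kf_01_02, Kf_01_10, Kf_01_11, Kf_01_12, Kf_01_20, Kf_01_21, Kf_01_22, Kf_02_00, Kf_02_01, Kf_02_02, Kf_02_10, Kf_02_11, Kf_02_12, Kf_02_20, Kf_02_21, Kf_02_22, Kf_10_00, Kf_10_01, Kf_10_02, Kf_10_10, Kf_10_11, Kf_10_12, Kf_10_20, Kf_10_21, Kf_10_22, Kf_11_00, Kf_11_01, Kf_11_02, Kf_11_10, Kf_11_11, Kf_11_12, Kf_11_20, Kf_11_21, Kf_11_22,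 Kf_12_00, Kf_12_01, Kf_12_02, Kf_12_10, Kf_12_11, Kf_12_12, Kf_12_20, Kf_12_21, Kf_12_22, Kf_20_00, Kf_20_01, Kf_20_02, Kf_20_10, Kf_20_11, Kf_20_12, Kf_20_20, Kf_20_21, Kf_20_22, Kf_21_00, Kf_21_01, Kf_21_02, Kf_21_10, Kf_21_11, Kf_21_12, Kf_21_20, Kf_21_21, Kf_21_22, Kf_22_00, Kf_22_01, Kf_22_02, Kf_22_10, Kf_22_11, Kf_22_12, Kf_22_20, Kf_22_21, Kf_22_22,
        Matrix.kroneckerMap_apply, ket, Prod.mk.injEq,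
        zero_mul, mul_zero, add_zero, zero_add, one_mul, mul_one]
      norm_num [rhoTilde, tauCat]
      try simp
      try ring
      try norm_num
    have h12 : ptrFirst (chanE (rhoTilde δ ⊗ₖ tauCat δ)) 1 2 = tauCat δ 1 2 := by
      simp only [ptrFirst, chanE, Matrix.of_apply, Matrix.add_apply, Matrix.mul_apply,
        Fintype.sum_prod_type, Fin.sum_univ_three,
        Kf_00_00, Kf_00_01, Kf_00_02, Kf_00_10, Kf_00_11, Kf_00_12, Kf_00_20, Kf_00_21, Kf_00_22, Kf_01_00, Kf_01_01, Kf_01_02, Kf_01_10, Kf_01_11, Kf_01_12, Kf_01_20, Kf_01_21, Kf_01_22, Kf_02_00, Kf_02_01, Kf_02_02, Kf_02_10, Kf_02_11, Kf_02_12, Kf_02_20, Kf_02_21, Kf_02_22, Kf_10_00, Kf_10_01, Kf_10_02, Kf_10_10, Kf_10_11, Kf_10_12, Kf_10_20, Kf_10_21, Kf_10_22, Kf_11_00, Kf_11_01, Kf_11_02, Kf_11_10, Kf_11_11, Kf_11_12, Kf_11_20, Kf_11_21, Kf_11_22, Kf_12_00, Kf_12_01, Kf_12_02, Kf_12_10,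 Kf_12_11, Kf_12_12, Kf_12_20, Kf_12_21, Kf_12_22, Kf_20_00, Kf_20_01, Kf_20_02, Kf_20_10, Kf_20_11, Kf_20_12, Kf_20_20, Kf_20_21, Kf_20_22, Kf_21_00, Kf_21_01, Kf_21_02, Kf_21_10, Kf_21_11, Kf_21_12, Kf_21_20, Kf_21_21, Kf_21_22, Kf_22_00, Kf_22_01, Kf_22_02, Kf_22_10, Kf_22_11, Kf_22_12, Kf_22_20, Kf_22_21, Kf_22_22,
        Matrix.kroneckerMap_apply, ket, Prod.mk.injEq,
        zero_mul, mul_zero, add_zero, zero_add, one_mul, mul_one]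
      norm_num [rhoTilde, tauCat]
      try simp
      try ring
      try norm_num
    have h20 : ptrFirst (chanE (rhoTilde δ ⊗ₖ tauCat δ)) 2 0 = tauCat δ 2 0 := by
      simp only [ptrFirst, chanE, Matrix.of_apply, Matrix.add_apply, Matrix.mul_apply,
        Fintype.sum_prod_type, Fin.sum_univ_three,
        Kf_00_00, Kf_00_01, Kf_00_02, Kf_00_10, Kf_00_11, Kf_00_12, Kf_00_20, Kf_00_21, Kf_00_22, Kf_01_00, Kf_01_01, Kf_01_02, Kf_01_10, Kf_01_11, Kf_01_12, Kf_01_20, Kf_01_21, Kf_01_22, Kf_02_00, Kf_02_01, Kf_02_02, Kf_02_10, Kf_02_11, Kf_02_12, Kf_02_20, Kf_02_21, Kf_02_22, Kf_10_00, Kf_10_01, Kf_10_02, Kf_10_10, Kf_10_11, Kf_10_12, Kf_10_20, Kf_10_21, Kf_10_22, Kf_11_00, Kf_11_01, Kf_11_02, Kf_11_10, Kf_11_11, Kf_11_12, Kf_11_20, Kf_11_21, Kf_11_22, Kf_12_00, Kf_12_01, Kf_12_02, Kf_12_10, Kf_12_11, Kf_12_12, Kf_12_20, Kf_12_21, Kf_12_22,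 Kf_20_00, Kf_20_01, Kf_20_02, Kf_20_10, Kf_20_11, Kf_20_12, Kf_20_20, Kf_20_21, Kf_20_22, Kf_21_00, Kf_21_01, Kf_21_02, Kf_21_10, Kf_21_11, Kf_21_12, Kf_21_20, Kf_21_21, Kf_21_22, Kf_22_00, Kf_22_01, Kf_22_02, Kf_22_10, Kf_22_11, Kf_22_12, Kf_22_20, Kf_22_21, Kf_22_22,
        Matrix.kroneckerMap_apply, ket, Prod.mk.injEq,
        zero_mul, mul_zero, add_zero, zero_add, one_mul, mul_one]
      norm_num [rhoTilde, tauCat]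
      try simp
      try ring
      try norm_num
    have h21 : ptrFirst (chanE (rhoTilde δ ⊗ₖ tauCat δ)) 2 1 = tauCat δ 2 1 := by
      simp only [ptrFirst, chanE, Matrix.of_apply, Matrix.add_apply, Matrix.mul_apply,
        Fintype.sum_prod_type, Fin.sum_univ_three,
        Kf_00_00, Kf_00_01, Kf_00_02, Kf_00_10, Kf_00_11, Kf_00_12, Kf_00_20, Kf_00_21, Kf_00_22, Kf_01_00, Kf_01_01, Kf_01_02, Kf_01_10, Kf_01_11, Kf_01_12, Kf_01_20, Kf_01_21, Kf_01_22, Kf_02_00, Kf_02_01, Kf_02_02, Kf_02_10, Kf_02_11, Kf_02_12, Kf_02_20, Kf_02_21, Kf_02_22, Kf_10_00, Kf_10_01, Kf_10_02, Kf_10_10, Kf_10_11, Kf_10_12, Kf_10_20, Kf_10_21, Kf_10_22, Kf_11_00, Kf_11_01, Kf_11_02, Kf_11_10, Kf_11_11, Kf_11_12, Kf_11_20, Kf_11_21, Kf_11_22, Kf_12_00, Kf_12_01, Kf_12_02, Kf_12_10, Kf_12_11, Kf_12_12, Kf_12_20, Kf_12_21, Kf_12_22, Kf_20_00, Kf_20_01,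 Kf_20_02, Kf_20_10, Kf_20_11, Kf_20_12, Kf_20_20, Kf_20_21, Kf_20_22, Kf_21_00, Kf_21_01, Kf_21_02, Kf_21_10, Kf_21_11, Kf_21_12, Kf_21_20, Kf_21_21, Kf_21_22, Kf_22_00, Kf_22_01, Kf_22_02, Kf_22_10, Kf_22_11, Kf_22_12, Kf_22_20, Kf_22_21, Kf_22_22,
        Matrix.kroneckerMap_apply, ket, Prod.mk.injEq,
        zero_mul, mul_zero, add_zero, zero_add, one_mul, mul_one]
      norm_num [rhoTilde, tauCat]
      try simp
      try ring
      try norm_num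
    have h22 : ptrFirst (chanE (rhoTilde δ ⊗ₖ tauCat δ)) 2 2 = tauCat δ 2 2 := by
      simp only [ptrFirst, chanE, Matrix.of_apply, Matrix.add_apply, Matrix.mul_apply,
        Fintype.sum_prod_type, Fin.sum_univ_three,
        Kf_00_00, Kf_00_01, Kf_00_02, Kf_00_10, Kf_00_11, Kf_00_12, Kf_00_20, Kf_00_21, Kf_00_22, Kf_01_00, Kf_01_01, Kf_01_02, Kf_01_10, Kf_01_11, Kf_01_12, Kf_01_20, Kf_01_21, Kf_01_22, Kf_02_00, Kf_02_01, Kf_02_02, Kf_02_10, Kf_02_11, Kf_02_12, Kf_02_20, Kf_02_21, Kf_02_22, Kf_10_00, Kf_10_01, Kf_10_02, Kf_10_10, Kf_10_11, Kf_10_12, Kf_10_20, Kf_10_21, Kf_10_22, Kf_11_00, Kf_11_01, Kf_11_02, Kf_11_10, Kf_11_11, Kf_11_12, Kf_11_20, Kf_11_21, Kf_11_22, Kf_12_00, Kf_12_01, Kf_12_02, Kf_12_10, Kf_12_11, Kf_12_12, Kf_12_20, Kf_12_21, Kf_12_22, Kf_20_00, Kf_20_01, Kf_20_02, Kf_20_10,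 Kf_20_11, Kf_20_12, Kf_20_20, Kf_20_21, Kf_20_22, Kf_21_00, Kf_21_01, Kf_21_02, Kf_21_10, Kf_21_11, Kf_21_12, Kf_21_20, Kf_21_21, Kf_21_22, Kf_22_00, Kf_22_01, Kf_22_02, Kf_22_10, Kf_22_11, Kf_22_12, Kf_22_20, Kf_22_21, Kf_22_22,
        Matrix.kroneckerMap_apply, ket, Prod.mk.injEq,
        zero_mul, mul_zero, add_zero, zero_add, one_mul, mul_one]
      norm_num [rhoTilde, tauCat]
      try simp
      try ring
      try norm_num
    ext a b
    fin_cases a <;> fin_cases b <;>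
      first
      | exact h00 | exact h01 | exact h02
      | exact h10 | exact h11 | exact h12
      | exact h20 | exact h21 | exact h22
  · rw [hchan]
    have key : ptrSecond (chanE (rhoTilde δ ⊗ₖ tauCat δ)) 0 2 = (152 * δ ^ 2 / 225 : ℂ) := by
      simp only [ptrSecond, chanE, Matrix.of_apply, Matrix.add_apply, Matrix.mul_apply,
        Fintype.sum_prod_type, Fin.sum_univ_three,
        Kf_00_00, Kf_00_01, Kf_00_02, Kf_00_10, Kf_00_11, Kf_00_12, Kf_00_20, Kf_00_21, Kf_00_22, Kf_01_00, Kf_01_01, Kf_01_02, Kf_01_10, Kf_01_11, Kf_01_12, Kf_01_20, Kf_01_21, Kf_01_22, Kf_02_00, Kf_02_01, Kf_02_02, Kf_02_10, Kf_02_11, Kf_02_12, Kf_02_20, Kf_02_21, Kf_02_22, Kf_10_00, Kf_10_01, Kf_10_02, Kf_10_10, Kf_10_11, Kf_10_12, Kf_10_20, Kf_10_21, Kf_10_22, Kf_11_00, Kf_11_01, Kf_11_02, Kf_11_10, Kf_11_11, Kf_11_12, Kf_11_20, Kf_11_21, Kf_11_22, Kf_12_00, Kf_12_01, Kf_12_02,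 Kf_12_10, Kf_12_11, Kf_12_12, Kf_12_20, Kf_12_21, Kf_12_22, Kf_20_00, Kf_20_01, Kf_20_02, Kf_20_10, Kf_20_11, Kf_20_12, Kf_20_20, Kf_20_21, Kf_20_22, Kf_21_00, Kf_21_01, Kf_21_02, Kf_21_10, Kf_21_11, Kf_21_12, Kf_21_20, Kf_21_21, Kf_21_22, Kf_22_00, Kf_22_01, Kf_22_02, Kf_22_10, Kf_22_11, Kf_22_12, Kf_22_20, Kf_22_21, Kf_22_22,
        Matrix.kroneckerMap_apply, ket, Prod.mk.injEq,
        zero_mul, mul_zero, add_zero, zero_add, one_mul, mul_one]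
      norm_num [rhoTilde, tauCat]
      try simp
      try ring
      try norm_num
    exact key
  · intro h
    positivity
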